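/- arXiv:1002.4076 — 2 statements merged into one kernel-verified Lean document; each statement's English description precedes it below -/
import Mathlib

section
/- Let p > 1 and suppose f, g ∈ L²(ℝ) satisfy ‖f‖₂ = ‖g‖₂ = 1 and that Δ_p(f) and Δ_p(g) are finite. For each real α with |α| < 1 define h_α = (f + αg)/‖f + αg‖₂. Then lim_{α→0} Δ_p(h_α) = Δ_p(f) and lim_{α→0} μ_p(h_α) = μ_p(f). -/
open MeasureTheory Filter
open scoped ENNReal

/-- `pVar p h a = ∫ |t - a|^p * |h t|^2 dt`. -/
noncomputable def pVar (p : ℝ) (h : ℝ → ℂ) (a : ℝ) : ℝ :=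
  ∫ t : ℝ, |t - a| ^ p * ‖h t‖ ^ 2

/-- The `p`-mean `μ_p(h)`: the (under the standing hypotheses unique) global minimizer
of `a ↦ pVar p h a`. -/
noncomputable def pMean (p : ℝ) (h : ℝ → ℂ) : ℝ :=
  sInf {a : ℝ | ∀ b : ℝ, pVar p h a ≤ pVar p h b}

/-- The `p`-dispersion `Δ_p(h) = (∫ |t - μ_p(h)|^p |h t|²)^{1/2}`. -/
noncomputable def pDisp (p : ℝ) (h : ℝ → ℂ) : ℝ :=
  Real.sqrt (pVar p h (pMean p h))

/-- The normalized perturbation `h_α = (f + α g) / ‖f + α g‖₂`. -/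
noncomputable def normPert (f g : ℝ → ℂ) (α : ℝ) : ℝ → ℂ :=
  fun t => (f t + (α : ℂ) * g t) /
    ((eLpNorm (fun s => f s + (α : ℂ) * g s) 2 volume).toReal : ℂ)

private lemma two_rpow_pos (p : ℝ) : (0:ℝ) < 2 ^ p := Real.rpow_pos_of_pos two_pos p

private lemma abs_add_rpow_le {p : ℝ} (hp : 0 ≤ p) (x y : ℝ) :
    |x + y| ^ p ≤ 2 ^ p * (|x| ^ p + |y| ^ p) := by
  have hm0 : (0:ℝ) ≤ max |x| |y| := le_trans (abs_nonneg x) (le_max_left _ _)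
  have hmax : |x + y| ≤ 2 * max |x| |y| := by
    have h1 := le_max_left |x| |y|
    have h2 := le_max_right |x| |y|
    have := abs_add_le x y
    linarith
  have h1 : |x + y| ^ p ≤ (2 * max |x| |y|) ^ p :=
    Real.rpow_le_rpow (abs_nonneg _) hmax hp
  have h2 : (2 * max |x| |y|) ^ p = 2 ^ p * (max |x| |y|) ^ p :=
    Real.mul_rpow (by norm_num) hm0
  have h3 : (max |x| |y|) ^ p ≤ |x| ^ p + |y| ^ p := by
    rcases le_total |x| |y| with h | h
    · rw [max_eq_right h]
      have := Real.rpow_nonneg (abs_nonneg x) p; linarith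
    · rw [max_eq_left h]
      have := Real.rpow_nonneg (abs_nonneg y) p; linarith
  calc |x + y| ^ p ≤ 2 ^ p * (max |x| |y|) ^ p := by rw [← h2]; exact h1
    _ ≤ 2 ^ p * (|x| ^ p + |y| ^ p) := by nlinarith [two_rpow_pos p]

private lemma abs_rpow_sub_le {p : ℝ} (hp : 0 ≤ p) (x y : ℝ) :
    |x| ^ p ≤ 2 ^ p * (|x - y| ^ p + |y| ^ p) := by
  have := abs_add_rpow_le hp (x - y) y
  simpa using this

private lemma midpoint_rpow_strict {p : ℝ} (hp : 1 < p) {x y : ℝ} (hxy : x ≠ y) :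
    |(x + y) / 2| ^ p < (|x| ^ p + |y| ^ p) / 2 := by
  have hp0 : (0:ℝ) < p := lt_trans one_pos hp
  by_cases habs : |x| = |y|
  · rcases abs_eq_abs.mp habs with h | h
    · exact absurd h hxy
    · subst h
      have hy0 : y ≠ 0 := by rintro rfl; simp at hxy
      have : (-y + y) / 2 = 0 := by ring
      rw [this, abs_zero, Real.zero_rpow (ne_of_gt hp0)]
      have h1 : (0:ℝ) < |y| ^ p := Real.rpow_pos_of_pos (abs_pos.mpr hy0) p
      rw [abs_neg]
      linarith
  · have key := (strictConvexOn_rpow hp).2 (Set.mem_Ici.2 (abs_nonneg x))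
      (Set.mem_Ici.2 (abs_nonneg y)) habs (by norm_num : (0:ℝ) < 1/2)
      (by norm_num : (0:ℝ) < 1/2) (by norm_num)
    simp only [smul_eq_mul] at key
    have h1 : |(x + y) / 2| ^ p ≤ (1/2 * |x| + 1/2 * |y|) ^ p := by
      apply Real.rpow_le_rpow (abs_nonneg _) _ hp0.le
      have := abs_add_le x y
      calc |(x + y) / 2| = |x + y| / 2 := by rw [abs_div]; norm_num
        _ ≤ (1/2 * |x| + 1/2 * |y|) := by linarith
    have := h1.trans_lt key
    linarith

private lemma abs_sub_rpow_le' {p : ℝ} (hp : 0 ≤ p) (t a : ℝ) :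
    |t - a| ^ p ≤ 2 ^ p * (|t| ^ p + |a| ^ p) := by
  have := abs_rpow_sub_le hp (t - a) (-a)
  simpa using this

private lemma integrand_aesm {p : ℝ} {F : ℝ → ℂ}
    (hF2 : Integrable (fun t => ‖F t‖ ^ 2) (volume : Measure ℝ)) (a : ℝ) :
    AEStronglyMeasurable (fun t : ℝ => |t - a| ^ p * ‖F t‖ ^ 2) volume := by
  have hm : Measurable fun t : ℝ => |t - a| ^ p :=
    (measurable_id.sub_const a).abs.pow measurable_const
  exact hm.aestronglyMeasurable.mul hF2.aestronglyMeasurable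

private lemma cont_abs_rpow {p : ℝ} (hp0 : 0 < p) : Continuous fun u : ℝ => |u| ^ p := by
  rw [continuous_iff_continuousAt]; intro u
  exact (Real.continuousAt_rpow_const |u| p (Or.inr hp0.le)).comp continuous_abs.continuousAt

private lemma pVar_nonneg (p : ℝ) (F : ℝ → ℂ) (a : ℝ) : 0 ≤ pVar p F a :=
  integral_nonneg fun t => by positivity

private lemma pVar_integrable {p : ℝ} (hp0 : 0 ≤ p) {F : ℝ → ℂ}
    (hF2 : Integrable (fun t => ‖F t‖ ^ 2) (volume : Measure ℝ))
    (hFp : Integrable (fun t : ℝ => |t| ^ p * ‖F t‖ ^ 2) volume) (a : ℝ) :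
    Integrable (fun t : ℝ => |t - a| ^ p * ‖F t‖ ^ 2) volume := by
  refine Integrable.mono'
    (g := fun t => 2 ^ p * (|t| ^ p * ‖F t‖ ^ 2) + (2 ^ p * |a| ^ p) * ‖F t‖ ^ 2)
    ((hFp.const_mul _).add (hF2.const_mul _)) (integrand_aesm hF2 a) ?_
  filter_upwards with t
  rw [Real.norm_eq_abs, abs_of_nonneg (by positivity)]
  have h1 := abs_sub_rpow_le' hp0 t a
  have h2 : (0:ℝ) ≤ ‖F t‖ ^ 2 := by positivity
  nlinarith [mul_le_mul_of_nonneg_right h1 h2]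

private lemma pVar_continuous {p : ℝ} (hp0 : 0 < p) {F : ℝ → ℂ}
    (hF2 : Integrable (fun t => ‖F t‖ ^ 2) (volume : Measure ℝ))
    (hFp : Integrable (fun t : ℝ => |t| ^ p * ‖F t‖ ^ 2) volume) :
    Continuous fun a => pVar p F a := by
  rw [continuous_iff_continuousAt]; intro a₀
  have : ContinuousAt (fun a => ∫ t : ℝ, |t - a| ^ p * ‖F t‖ ^ 2) a₀ := by
    apply continuousAt_of_dominated
      (bound := fun t => 2 ^ p * (|t| ^ p * ‖F t‖ ^ 2) + (2 ^ p * (|a₀| + 1) ^ p) * ‖F t‖ ^ 2)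
    · filter_upwards with a using integrand_aesm hF2 a
    · filter_upwards [Metric.ball_mem_nhds a₀ one_pos] with a ha
      filter_upwards with t
      have hd : |a - a₀| < 1 := by rwa [Metric.mem_ball, Real.dist_eq] at ha
      have haa : |a| ≤ |a₀| + 1 := by
        have h := abs_add_le (a - a₀) a₀
        have : a - a₀ + a₀ = a := by ring
        rw [this] at h; linarith
      rw [Real.norm_eq_abs, abs_of_nonneg (by positivity)]
      have h1 := abs_sub_rpow_le' hp0.le t a
      have h2 : |a| ^ p ≤ (|a₀| + 1) ^ p := Real.rpow_le_rpow (abs_nonneg _) haa hp0.le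
      have h3 : (0:ℝ) ≤ ‖F t‖ ^ 2 := by positivity
      nlinarith [mul_le_mul_of_nonneg_right h1 h3, two_rpow_pos p,
        mul_le_mul_of_nonneg_right h2 h3]
    · exact (hFp.const_mul _).add (hF2.const_mul _)
    · filter_upwards with t
      exact (((cont_abs_rpow hp0).comp (continuous_sub_left t)).continuousAt).mul
        continuousAt_const
  exact this

private lemma pVar_zero_eq {p : ℝ} (F : ℝ → ℂ) :
    pVar p F 0 = ∫ t : ℝ, |t| ^ p * ‖F t‖ ^ 2 := by
  simp [pVar]

private lemma pVar_lower {p : ℝ} (hp0 : 0 ≤ p) {F : ℝ → ℂ}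
    (hF2 : Integrable (fun t => ‖F t‖ ^ 2) (volume : Measure ℝ))
    (hFp : Integrable (fun t : ℝ => |t| ^ p * ‖F t‖ ^ 2) volume) (a : ℝ) :
    |a| ^ p * (∫ t : ℝ, ‖F t‖ ^ 2) ≤ 2 ^ p * (pVar p F a + pVar p F 0) := by
  have key : ∀ t : ℝ, |a| ^ p * ‖F t‖ ^ 2
      ≤ 2 ^ p * (|t - a| ^ p * ‖F t‖ ^ 2 + |t| ^ p * ‖F t‖ ^ 2) := by
    intro t
    have h1 : |a| ^ p ≤ 2 ^ p * (|t - a| ^ p + |t| ^ p) := by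
      have h := abs_add_rpow_le hp0 (-(t - a)) t
      have e : -(t - a) + t = a := by ring
      rw [e, abs_neg] at h
      exact h
    have h2 : (0:ℝ) ≤ ‖F t‖ ^ 2 := by positivity
    nlinarith [mul_le_mul_of_nonneg_right h1 h2]
  have hint := pVar_integrable hp0 hF2 hFp a
  calc |a| ^ p * ∫ t : ℝ, ‖F t‖ ^ 2 = ∫ t : ℝ, |a| ^ p * ‖F t‖ ^ 2 :=
        (integral_const_mul _ _).symm
    _ ≤ ∫ t : ℝ, 2 ^ p * (|t - a| ^ p * ‖F t‖ ^ 2 + |t| ^ p * ‖F t‖ ^ 2) :=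
        integral_mono (hF2.const_mul _) ((hint.add hFp).const_mul _) key
    _ = 2 ^ p * (pVar p F a + pVar p F 0) := by
        rw [integral_const_mul, integral_add hint hFp, pVar_zero_eq]
        rfl

private lemma exists_min {p : ℝ} (hp : 1 < p) {F : ℝ → ℂ}
    (hF2 : Integrable (fun t => ‖F t‖ ^ 2) (volume : Measure ℝ))
    (hFp : Integrable (fun t : ℝ => |t| ^ p * ‖F t‖ ^ 2) volume)
    (hI : 0 < ∫ t : ℝ, ‖F t‖ ^ 2) :
    (∀ b, pVar p F (pMean p F) ≤ pVar p F b) ∧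
      |pMean p F| ^ p * (∫ t : ℝ, ‖F t‖ ^ 2) ≤ 2 ^ p * (2 * pVar p F 0) := by
  have hp0 : (0:ℝ) < p := lt_trans one_pos hp
  set S : Set ℝ := {a : ℝ | ∀ b : ℝ, pVar p F a ≤ pVar p F b} with hS
  have hpm : pMean p F = sInf S := rfl
  have hq0 : 0 ≤ pVar p F 0 := pVar_nonneg p F 0
  set I : ℝ := ∫ t : ℝ, ‖F t‖ ^ 2 with hIdef
  set R : ℝ := (2 ^ p * (2 * pVar p F 0 + 1) / I) ^ p⁻¹ with hRdef
  have hR0 : 0 ≤ R := Real.rpow_nonneg (by positivity) _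
  have hRp : R ^ p = 2 ^ p * (2 * pVar p F 0 + 1) / I :=
    Real.rpow_inv_rpow (by positivity) (ne_of_gt hp0)
  have hout : ∀ b : ℝ, R < |b| → pVar p F 0 < pVar p F b := by
    intro b hb
    have h1 := pVar_lower hp0.le hF2 hFp b
    have h2 : R ^ p * I < |b| ^ p * I :=
      mul_lt_mul_of_pos_right (Real.rpow_lt_rpow hR0 hb hp0) hI
    rw [hRp, div_mul_cancel₀ _ (ne_of_gt hI)] at h2
    have h2p := two_rpow_pos p
    nlinarith
  have hcont := pVar_continuous hp0 hF2 hFp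
  have h0Icc : (0:ℝ) ∈ Set.Icc (-R) R := by constructor <;> linarith
  obtain ⟨m, hmIcc, hmmin⟩ := (isCompact_Icc (a := -R) (b := R)).exists_isMinOn
    ⟨0, h0Icc⟩ hcont.continuousOn
  have hmS : m ∈ S := by
    intro b
    by_cases hb : b ∈ Set.Icc (-R) R
    · exact hmmin hb
    · have hb' : R < |b| := by
        rw [Set.mem_Icc, not_and_or] at hb
        rcases hb with h | h <;> push_neg at h <;> [skip; skip] <;> rw [lt_abs] <;>
          [exact Or.inr (by linarith); exact Or.inl h]
      exact le_of_lt (lt_of_le_of_lt (hmmin h0Icc) (hout b hb'))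
  have hSbd : ∀ a ∈ S, |a| ≤ R := by
    intro a ha
    by_contra h
    push_neg at h
    exact absurd (ha 0) (not_le.mpr (hout a h))
  have hclosed : IsClosed S := by
    have : S = ⋂ b : ℝ, {a : ℝ | pVar p F a ≤ pVar p F b} := by
      ext a; simp [hS, Set.mem_iInter]
    rw [this]
    exact isClosed_iInter fun b => isClosed_le hcont continuous_const
  have hbdd : BddBelow S := ⟨-R, fun a ha => neg_le_of_abs_le (hSbd a ha)⟩
  have hInf : sInf S ∈ S := hclosed.csInf_mem ⟨m, hmS⟩ hbdd
  rw [hpm]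
  refine ⟨hInf, ?_⟩
  have h1 := pVar_lower hp0.le hF2 hFp (sInf S)
  have h2 : pVar p F (sInf S) ≤ pVar p F 0 := hInf 0
  have h2p := two_rpow_pos p
  nlinarith

private lemma min_unique {p : ℝ} (hp : 1 < p) {F : ℝ → ℂ}
    (hF2 : Integrable (fun t => ‖F t‖ ^ 2) (volume : Measure ℝ))
    (hFp : Integrable (fun t : ℝ => |t| ^ p * ‖F t‖ ^ 2) volume)
    (hne : ¬ F =ᵐ[volume] 0) {a b : ℝ}
    (ha : ∀ c, pVar p F a ≤ pVar p F c) (hb : ∀ c, pVar p F b ≤ pVar p F c) :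
    a = b := by
  by_contra hab
  have hp0 : (0:ℝ) < p := lt_trans one_pos hp
  set w : ℝ → ℝ := fun t => (|t - a| ^ p + |t - b| ^ p) / 2 - |t - (a + b) / 2| ^ p with hw
  have hwpos : ∀ t, 0 < w t := by
    intro t
    have hne' : t - a ≠ t - b := fun h => hab (by linarith)
    have key := midpoint_rpow_strict hp hne'
    have harg : (t - a + (t - b)) / 2 = t - (a + b) / 2 := by ring
    rw [harg] at key
    simp only [hw]
    linarith
  have hIa := pVar_integrable hp0.le hF2 hFp a
  have hIb := pVar_integrable hp0.le hF2 hFp b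
  have hIm := pVar_integrable hp0.le hF2 hFp ((a + b) / 2)
  have hint : Integrable (fun t => w t * ‖F t‖ ^ 2) volume := by
    have : (fun t : ℝ => w t * ‖F t‖ ^ 2) = fun t =>
        (|t - a| ^ p * ‖F t‖ ^ 2 + |t - b| ^ p * ‖F t‖ ^ 2) / 2
          - |t - (a + b) / 2| ^ p * ‖F t‖ ^ 2 := by
      funext t; simp only [hw]; ring
    rw [this]
    exact ((hIa.add hIb).div_const 2).sub hIm
  have hipos : 0 < ∫ t : ℝ, w t * ‖F t‖ ^ 2 := by
    rw [integral_pos_iff_support_of_nonneg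
      (fun t => mul_nonneg (hwpos t).le (by positivity)) hint]
    have hsupp : {t : ℝ | F t ≠ 0} ⊆ Function.support fun t => w t * ‖F t‖ ^ 2 := by
      intro t ht
      have : ‖F t‖ ^ 2 ≠ 0 := pow_ne_zero _ (norm_ne_zero_iff.mpr ht)
      exact mul_ne_zero (ne_of_gt (hwpos t)) this
    refine lt_of_lt_of_le ?_ (measure_mono hsupp)
    by_contra h
    push_neg at h
    apply hne
    rw [Filter.EventuallyEq, ae_iff]
    exact le_antisymm (by simpa using h) zero_le
  have hsplit : ∫ t : ℝ, w t * ‖F t‖ ^ 2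
      = (pVar p F a + pVar p F b) / 2 - pVar p F ((a + b) / 2) := by
    have heq : (fun t : ℝ => w t * ‖F t‖ ^ 2) = fun t =>
        (|t - a| ^ p * ‖F t‖ ^ 2 + |t - b| ^ p * ‖F t‖ ^ 2) / 2
          - |t - (a + b) / 2| ^ p * ‖F t‖ ^ 2 := by
      funext t; simp only [hw]; ring
    have hI1 : Integrable (fun t : ℝ =>
        (|t - a| ^ p * ‖F t‖ ^ 2 + |t - b| ^ p * ‖F t‖ ^ 2) / 2) volume :=
      (hIa.add hIb).div_const 2
    have e1 : ∫ t : ℝ, (|t - a| ^ p * ‖F t‖ ^ 2 + |t - b| ^ p * ‖F t‖ ^ 2) / 2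
        = (pVar p F a + pVar p F b) / 2 := by
      rw [integral_div]
      congr 1
      exact integral_add hIa hIb
    rw [heq, integral_sub hI1 hIm, e1]
    rfl
  have h1 := ha ((a + b) / 2)
  have h2 := hb a
  rw [hsplit] at hipos
  linarith

noncomputable def nrm (f g : ℝ → ℂ) (α : ℝ) : ℝ :=
  (eLpNorm (fun s => f s + (α : ℂ) * g s) 2 volume).toReal

private lemma normPert_sq (f g : ℝ → ℂ) (α : ℝ) (t : ℝ) :
    ‖normPert f g α t‖ ^ 2 = ‖f t + (α : ℂ) * g t‖ ^ 2 / (nrm f g α) ^ 2 := by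
  rw [show normPert f g α t = (f t + (α : ℂ) * g t) / ((nrm f g α : ℝ) : ℂ) from rfl]
  rw [norm_div, Complex.norm_real, Real.norm_eq_abs, abs_of_nonneg, div_pow]
  exact ENNReal.toReal_nonneg

private lemma pVar_normPert (p : ℝ) (f g : ℝ → ℂ) (α b : ℝ) :
    pVar p (normPert f g α) b
      = pVar p (fun t => f t + (α : ℂ) * g t) b / (nrm f g α) ^ 2 := by
  unfold pVar
  rw [← integral_div]
  congr 1
  funext t
  rw [normPert_sq]
  ring

set_option maxHeartbeats 2000000 in
/-- Let `p > 1` and `f, g ∈ L²(ℝ)` with `‖f‖₂ = ‖g‖₂ = 1` and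
`Δ_p(f), Δ_p(g) < ∞`.  For `|α| < 1` set `h_α = (f + αg)/‖f + αg‖₂`.  Then
`Δ_p(h_α) → Δ_p(f)` and `μ_p(h_α) → μ_p(f)` as `α → 0`. -/
theorem statement3 (p : ℝ) (hp : 1 < p) (f g : ℝ → ℂ)
    (hfL2 : MemLp f 2 (volume : Measure ℝ)) (hgL2 : MemLp g 2 (volume : Measure ℝ))
    (hfnorm : eLpNorm f 2 volume = 1) (hgnorm : eLpNorm g 2 volume = 1)
    (hffin : Integrable (fun t : ℝ => |t| ^ p * ‖f t‖ ^ 2) volume)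
    (hgfin : Integrable (fun t : ℝ => |t| ^ p * ‖g t‖ ^ 2) volume) :
    Tendsto (fun α : ℝ => pDisp p (normPert f g α)) (nhds 0) (nhds (pDisp p f)) ∧
    Tendsto (fun α : ℝ => pMean p (normPert f g α)) (nhds 0) (nhds (pMean p f)) := by
  have hp0 : (0:ℝ) < p := lt_trans one_pos hp
  have hfm := hfL2.aestronglyMeasurable
  have hgm := hgL2.aestronglyMeasurable
  have hmem : ∀ α : ℝ, MemLp (fun t => f t + (α : ℂ) * g t) 2 (volume : Measure ℝ) := by
    intro α
    have h : MemLp (fun t => (α : ℂ) * g t) 2 (volume : Measure ℝ) := by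
      have := hgL2.const_smul (α : ℂ)
      exact this
    exact hfL2.add h
  have int_sq : ∀ F : ℝ → ℂ, MemLp F 2 (volume : Measure ℝ) →
      Integrable (fun t => ‖F t‖ ^ 2) volume := by
    intro F hF
    have h := hF.integrable_norm_rpow two_ne_zero ENNReal.ofNat_ne_top
    simp only [ENNReal.toReal_ofNat, Real.rpow_two] at h
    exact h
  have sq_int_eq : ∀ F : ℝ → ℂ, MemLp F 2 (volume : Measure ℝ) →
      ∫ t : ℝ, ‖F t‖ ^ 2 = ((eLpNorm F 2 volume).toReal) ^ 2 := by
    intro F hF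
    have h := hF.eLpNorm_eq_integral_rpow_norm two_ne_zero ENNReal.ofNat_ne_top
    have hnn : (0:ℝ) ≤ ∫ t : ℝ, ‖F t‖ ^ 2 := integral_nonneg fun t => by positivity
    simp only [ENNReal.toReal_ofNat, Real.rpow_two] at h
    rw [h, ENNReal.toReal_ofReal (by positivity)]
    have h2 := Real.rpow_inv_rpow hnn (two_ne_zero (α := ℝ))
    calc ∫ t : ℝ, ‖F t‖ ^ 2 = ((∫ t : ℝ, ‖F t‖ ^ 2) ^ ((2:ℝ)⁻¹)) ^ (2:ℝ) := h2.symm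
      _ = ((∫ t : ℝ, ‖F t‖ ^ 2) ^ ((2:ℝ)⁻¹)) ^ (2:ℕ) := by
          rw [Real.rpow_two]
  have hIf : ∫ t : ℝ, ‖f t‖ ^ 2 = 1 := by rw [sq_int_eq f hfL2, hfnorm]; norm_num
  have hf2 : Integrable (fun t => ‖f t‖ ^ 2) volume := int_sq f hfL2
  have hg2 : Integrable (fun t => ‖g t‖ ^ 2) volume := int_sq g hgL2
  have hsm : ∀ α : ℝ, eLpNorm (fun s => (α:ℂ) * g s) 2 volume = ENNReal.ofReal |α| := by
    intro α
    have h1 : (fun s => (α:ℂ) * g s) = (α:ℂ) • g := by funext s; simp [smul_eq_mul]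
    rw [h1, eLpNorm_const_smul, hgnorm]
    simp only [ENNReal.smul_def, smul_eq_mul, mul_one]
    rw [← ofReal_norm, Complex.norm_real, Real.norm_eq_abs]
  have hntop : ∀ α : ℝ, eLpNorm (fun s => f s + (α:ℂ) * g s) 2 volume ≠ ⊤ :=
    fun α => (hmem α).eLpNorm_ne_top
  have hn_ub : ∀ α : ℝ, nrm f g α ≤ 1 + |α| := by
    intro α
    have h : eLpNorm (fun s => f s + (α:ℂ) * g s) 2 volume
        ≤ eLpNorm f 2 volume + eLpNorm (fun s => (α:ℂ) * g s) 2 volume :=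
      eLpNorm_add_le hfm (hgm.const_mul (α:ℂ)) (by norm_num : (1:ℝ≥0∞) ≤ 2)
    rw [hsm α, hfnorm] at h
    have hfin : (1 + ENNReal.ofReal |α| : ℝ≥0∞) ≠ ⊤ :=
      ENNReal.add_ne_top.mpr ⟨ENNReal.one_ne_top, ENNReal.ofReal_ne_top⟩
    have h3 := ENNReal.toReal_mono hfin h
    rwa [ENNReal.toReal_add ENNReal.one_ne_top ENNReal.ofReal_ne_top, ENNReal.toReal_one,
      ENNReal.toReal_ofReal (abs_nonneg α)] at h3
  have hn_lb : ∀ α : ℝ, 1 - |α| ≤ nrm f g α := by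
    intro α
    have hfeq : f = fun s => (f s + (α:ℂ) * g s) + ((-α : ℝ) : ℂ) * g s := by
      funext s; push_cast; ring
    have h : (1:ℝ≥0∞) ≤ eLpNorm (fun s => f s + (α:ℂ) * g s) 2 volume
        + ENNReal.ofReal |α| := by
      calc (1:ℝ≥0∞) = eLpNorm f 2 volume := hfnorm.symm
        _ = eLpNorm (fun s => (f s + (α:ℂ) * g s) + ((-α : ℝ) : ℂ) * g s) 2 volume := by
            rw [← hfeq]
        _ ≤ eLpNorm (fun s => f s + (α:ℂ) * g s) 2 volume
            + eLpNorm (fun s => ((-α : ℝ) : ℂ) * g s) 2 volume :=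
          eLpNorm_add_le (hmem α).aestronglyMeasurable (hgm.const_mul _)
            (by norm_num : (1:ℝ≥0∞) ≤ 2)
        _ = _ := by rw [hsm (-α), abs_neg]
    have hfin : eLpNorm (fun s => f s + (α:ℂ) * g s) 2 volume + ENNReal.ofReal |α| ≠ ⊤ :=
      ENNReal.add_ne_top.mpr ⟨hntop α, ENNReal.ofReal_ne_top⟩
    have h3 := ENNReal.toReal_mono hfin h
    rw [ENNReal.toReal_add (hntop α) ENNReal.ofReal_ne_top, ENNReal.toReal_one,
      ENNReal.toReal_ofReal (abs_nonneg α)] at h3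
    have he : nrm f g α = (eLpNorm (fun s => f s + (α:ℂ) * g s) 2 volume).toReal := rfl
    linarith [h3]
  -- squares of phi
  have hphisq : ∀ α : ℝ, Integrable (fun t => ‖f t + (α:ℂ) * g t‖ ^ 2) volume :=
    fun α => int_sq _ (hmem α)
  have hsqdiff : ∀ (α : ℝ), |α| ≤ 1 → ∀ t : ℝ,
      |‖f t + (α:ℂ) * g t‖ ^ 2 - ‖f t‖ ^ 2| ≤ |α| * (‖f t‖ ^ 2 + 2 * ‖g t‖ ^ 2) := by
    intro α hα t
    have h0 : ‖(α:ℂ) * g t‖ = |α| * ‖g t‖ := by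
      rw [norm_mul, Complex.norm_real, Real.norm_eq_abs]
    have h1 : |‖f t + (α:ℂ) * g t‖ - ‖f t‖| ≤ |α| * ‖g t‖ := by
      have := abs_norm_sub_norm_le (f t + (α:ℂ) * g t) (f t)
      simpa [h0] using this
    have h2 := norm_nonneg (f t + (α:ℂ) * g t)
    have h3 := norm_nonneg (f t)
    have h4 := norm_nonneg (g t)
    have h5 := abs_nonneg α
    rw [abs_le] at h1 ⊢
    have m1 : (‖f t + (α:ℂ) * g t‖ - ‖f t‖) * (‖f t + (α:ℂ) * g t‖ + ‖f t‖)
        ≤ (|α| * ‖g t‖) * (‖f t + (α:ℂ) * g t‖ + ‖f t‖) :=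
      mul_le_mul_of_nonneg_right h1.2 (by linarith)
    have m1' : (‖f t‖ - ‖f t + (α:ℂ) * g t‖) * (‖f t + (α:ℂ) * g t‖ + ‖f t‖)
        ≤ (|α| * ‖g t‖) * (‖f t + (α:ℂ) * g t‖ + ‖f t‖) :=
      mul_le_mul_of_nonneg_right (by linarith [h1.1]) (by linarith)
    have m2 : (|α| * ‖g t‖) * (‖f t + (α:ℂ) * g t‖ + ‖f t‖)
        ≤ (|α| * ‖g t‖) * (2 * ‖f t‖ + |α| * ‖g t‖) :=
      mul_le_mul_of_nonneg_left (by linarith [h1.2]) (by positivity)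
    have m4 : |α| * (2 * ‖g t‖ * ‖f t‖) ≤ |α| * (‖f t‖ ^ 2 + ‖g t‖ ^ 2) :=
      mul_le_mul_of_nonneg_left (by nlinarith [sq_nonneg (‖f t‖ - ‖g t‖)]) h5
    have m5 : (|α| * |α|) * ‖g t‖ ^ 2 ≤ |α| * ‖g t‖ ^ 2 := by
      nlinarith [mul_nonneg (mul_nonneg h5 (sub_nonneg.mpr hα)) (sq_nonneg ‖g t‖)]
    constructor <;> nlinarith [m1, m1', m2, m4, m5]
  have hphip : ∀ α : ℝ, |α| ≤ 1 →
      Integrable (fun t : ℝ => |t| ^ p * ‖f t + (α:ℂ) * g t‖ ^ 2) volume := by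
    intro α hα
    refine Integrable.mono'
      (g := fun t => 2 * (|t| ^ p * ‖f t‖ ^ 2) + 2 * (|t| ^ p * ‖g t‖ ^ 2))
      ((hffin.const_mul 2).add (hgfin.const_mul 2))
      ((measurable_abs.pow measurable_const).aestronglyMeasurable.mul
        (hphisq α).aestronglyMeasurable) ?_
    filter_upwards with t
    have hd := hsqdiff α hα t
    have h6 : (0:ℝ) ≤ |t| ^ p := Real.rpow_nonneg (abs_nonneg t) p
    have h7 : ‖f t + (α:ℂ) * g t‖ ^ 2 ≤ 2 * ‖f t‖ ^ 2 + 2 * ‖g t‖ ^ 2 := by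
      rw [abs_le] at hd
      nlinarith [hd.2, sq_nonneg ‖f t‖, sq_nonneg ‖g t‖]
    rw [Real.norm_eq_abs, abs_of_nonneg (by positivity)]
    nlinarith [mul_le_mul_of_nonneg_left h7 h6]
  -- normPert squares
  have hnormsq : ∀ α : ℝ, (fun t : ℝ => ‖normPert f g α t‖ ^ 2)
      = fun t : ℝ => ‖f t + (α:ℂ) * g t‖ ^ 2 / (nrm f g α) ^ 2 := by
    intro α; funext t; exact normPert_sq f g α t
  have hNP2 : ∀ α : ℝ, Integrable (fun t => ‖normPert f g α t‖ ^ 2) volume := by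
    intro α; rw [hnormsq α]; exact (hphisq α).div_const _
  have hNPp : ∀ α : ℝ, |α| ≤ 1 →
      Integrable (fun t : ℝ => |t| ^ p * ‖normPert f g α t‖ ^ 2) volume := by
    intro α hα
    have e : (fun t : ℝ => |t| ^ p * ‖normPert f g α t‖ ^ 2)
        = fun t : ℝ => (|t| ^ p * ‖f t + (α:ℂ) * g t‖ ^ 2) / (nrm f g α) ^ 2 := by
      funext t; rw [normPert_sq]; ring
    rw [e]; exact (hphip α hα).div_const _
  have hnpos : ∀ α : ℝ, |α| ≤ 1/2 → (1:ℝ)/2 ≤ nrm f g α := fun α hα => by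
    have := hn_lb α; linarith
  have hnormint : ∀ α : ℝ, |α| ≤ 1/2 → ∫ t : ℝ, ‖normPert f g α t‖ ^ 2 = 1 := by
    intro α hα
    rw [hnormsq α, integral_div, sq_int_eq _ (hmem α)]
    have h1 : (nrm f g α) ^ 2 ≠ 0 := by
      have := hnpos α hα; positivity
    exact div_self h1
  -- the master bound function
  set MB : ℝ → ℝ :=
    fun B => ∫ t : ℝ, 2 ^ p * (|t| ^ p + B ^ p) * (‖f t‖ ^ 2 + 2 * ‖g t‖ ^ 2) with hMBdef
  have hMBint : ∀ B : ℝ, Integrable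
      (fun t : ℝ => 2 ^ p * (|t| ^ p + B ^ p) * (‖f t‖ ^ 2 + 2 * ‖g t‖ ^ 2)) volume := by
    intro B
    have e : (fun t : ℝ => 2 ^ p * (|t| ^ p + B ^ p) * (‖f t‖ ^ 2 + 2 * ‖g t‖ ^ 2))
        = fun t : ℝ => ((2^p) * (|t|^p * ‖f t‖^2) + (2^p*2) * (|t|^p * ‖g t‖^2))
            + ((2^p*B^p) * ‖f t‖^2 + (2^p*B^p*2) * ‖g t‖^2) := by
      funext t; ring
    rw [e]
    exact ((hffin.const_mul _).add (hgfin.const_mul _)).add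
      ((hf2.const_mul _).add (hg2.const_mul _))
  have hMBnn : ∀ B : ℝ, 0 ≤ B → 0 ≤ MB B := by
    intro B hB
    apply integral_nonneg
    intro t
    have h1 : (0:ℝ) ≤ |t| ^ p := Real.rpow_nonneg (abs_nonneg t) p
    have h2 : (0:ℝ) ≤ B ^ p := Real.rpow_nonneg hB p
    have h3 := (two_rpow_pos p).le
    have h4 : (0:ℝ) ≤ ‖f t‖ ^ 2 + 2 * ‖g t‖ ^ 2 := by positivity
    exact mul_nonneg (mul_nonneg h3 (by linarith)) h4
  have hwb : ∀ B : ℝ, ∀ b : ℝ, |b| ≤ B → ∀ t : ℝ,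
      |t - b| ^ p ≤ 2 ^ p * (|t| ^ p + B ^ p) := by
    intro B b hb t
    have h1 := abs_sub_rpow_le' hp0.le t b
    have h2 : |b| ^ p ≤ B ^ p := Real.rpow_le_rpow (abs_nonneg b) hb hp0.le
    have h3 := (two_rpow_pos p).le
    nlinarith [Real.rpow_nonneg (abs_nonneg t) p]
  have est1 : ∀ B : ℝ, ∀ α : ℝ, |α| ≤ 1 → ∀ b : ℝ, |b| ≤ B →
      |pVar p (fun t => f t + (α:ℂ) * g t) b - pVar p f b| ≤ |α| * MB B := by
    intro B α hα b hb
    have hIφ := pVar_integrable hp0.le (hphisq α) (hphip α hα) b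
    have hIf' := pVar_integrable hp0.le hf2 hffin b
    have e1 : pVar p (fun t => f t + (α:ℂ) * g t) b - pVar p f b
        = ∫ t : ℝ, (|t - b| ^ p * ‖f t + (α:ℂ) * g t‖ ^ 2 - |t - b| ^ p * ‖f t‖ ^ 2) :=
      (integral_sub hIφ hIf').symm
    rw [e1]
    have h2 : |∫ t : ℝ, (|t - b| ^ p * ‖f t + (α:ℂ) * g t‖ ^ 2 - |t - b| ^ p * ‖f t‖ ^ 2)|
        ≤ ∫ t : ℝ, |(|t - b| ^ p * ‖f t + (α:ℂ) * g t‖ ^ 2 - |t - b| ^ p * ‖f t‖ ^ 2)| := by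
      have := norm_integral_le_integral_norm
        (fun t : ℝ => |t - b| ^ p * ‖f t + (α:ℂ) * g t‖ ^ 2 - |t - b| ^ p * ‖f t‖ ^ 2) (μ := volume)
      simpa [Real.norm_eq_abs] using this
    refine h2.trans ?_
    have h3 : ∫ t : ℝ, |(|t - b| ^ p * ‖f t + (α:ℂ) * g t‖ ^ 2 - |t - b| ^ p * ‖f t‖ ^ 2)|
        ≤ ∫ t : ℝ, |α| * (2 ^ p * (|t| ^ p + B ^ p) * (‖f t‖ ^ 2 + 2 * ‖g t‖ ^ 2)) := by
      refine integral_mono (hIφ.sub hIf').abs ((hMBint B).const_mul _) ?_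
      intro t
      have hX : (0:ℝ) ≤ |t - b| ^ p := Real.rpow_nonneg (abs_nonneg _) p
      have hsd := hsqdiff α hα t
      have hW : (0:ℝ) ≤ |α| * (‖f t‖ ^ 2 + 2 * ‖g t‖ ^ 2) := by positivity
      calc |(|t - b| ^ p * ‖f t + (α:ℂ) * g t‖ ^ 2 - |t - b| ^ p * ‖f t‖ ^ 2)|
          = |t - b| ^ p * |‖f t + (α:ℂ) * g t‖ ^ 2 - ‖f t‖ ^ 2| := by
            rw [← mul_sub, abs_mul, abs_of_nonneg hX]
        _ ≤ |t - b| ^ p * (|α| * (‖f t‖ ^ 2 + 2 * ‖g t‖ ^ 2)) :=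
            mul_le_mul_of_nonneg_left hsd hX
        _ ≤ (2 ^ p * (|t| ^ p + B ^ p)) * (|α| * (‖f t‖ ^ 2 + 2 * ‖g t‖ ^ 2)) :=
            mul_le_mul_of_nonneg_right (hwb B b hb t) hW
        _ = |α| * (2 ^ p * (|t| ^ p + B ^ p) * (‖f t‖ ^ 2 + 2 * ‖g t‖ ^ 2)) := by ring
    refine h3.trans ?_
    rw [integral_const_mul]
  have est2 : ∀ B : ℝ, ∀ b : ℝ, |b| ≤ B → pVar p f b ≤ MB B := by
    intro B b hb
    have hIf' := pVar_integrable hp0.le hf2 hffin b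
    refine integral_mono hIf' (hMBint B) ?_
    intro t
    have hX : (0:ℝ) ≤ |t - b| ^ p := Real.rpow_nonneg (abs_nonneg _) p
    have h1 : ‖f t‖ ^ 2 ≤ ‖f t‖ ^ 2 + 2 * ‖g t‖ ^ 2 := by nlinarith [sq_nonneg ‖g t‖]
    calc |t - b| ^ p * ‖f t‖ ^ 2 ≤ |t - b| ^ p * (‖f t‖ ^ 2 + 2 * ‖g t‖ ^ 2) :=
          mul_le_mul_of_nonneg_left h1 hX
      _ ≤ 2 ^ p * (|t| ^ p + B ^ p) * (‖f t‖ ^ 2 + 2 * ‖g t‖ ^ 2) :=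
          mul_le_mul_of_nonneg_right (hwb B b hb t) (by positivity)
  have est3 : ∀ B : ℝ, 0 ≤ B → ∀ α : ℝ, |α| ≤ 1 → ∀ b : ℝ, |b| ≤ B →
      pVar p (fun t => f t + (α:ℂ) * g t) b ≤ 2 * MB B := by
    intro B hB α hα b hb
    have h1 := est1 B α hα b hb
    have h2 := est2 B b hb
    have h3 := hMBnn B hB
    rw [abs_le] at h1
    nlinarith [h1.2]
  have est4 : ∀ α : ℝ, |α| ≤ 1/2 → |((nrm f g α) ^ 2)⁻¹ - 1| ≤ 12 * |α| := by
    intro α hα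
    have h1 := hn_lb α
    have h2 := hn_ub α
    have h3 := hnpos α hα
    have h5 := abs_nonneg α
    have hne : (nrm f g α) ^ 2 ≠ 0 := by positivity
    have hinv : ((nrm f g α) ^ 2)⁻¹ * (nrm f g α) ^ 2 = 1 := inv_mul_cancel₀ hne
    have hipos : 0 < ((nrm f g α) ^ 2)⁻¹ := by positivity
    have hinv_le : ((nrm f g α) ^ 2)⁻¹ ≤ 4 := by
      have h14 : (1:ℝ)/4 ≤ (nrm f g α) ^ 2 := by nlinarith
      have := inv_anti₀ (by norm_num : (0:ℝ) < 1/4) h14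
      linarith [this]
    have habs2 : |1 - (nrm f g α) ^ 2| ≤ 3 * |α| := by
      rw [abs_le]
      constructor <;> nlinarith
    have e : ((nrm f g α) ^ 2)⁻¹ - 1 = ((nrm f g α) ^ 2)⁻¹ * (1 - (nrm f g α) ^ 2) := by
      field_simp
    calc |((nrm f g α) ^ 2)⁻¹ - 1| = ((nrm f g α) ^ 2)⁻¹ * |1 - (nrm f g α) ^ 2| := by
          rw [e, abs_mul, abs_of_nonneg hipos.le]
      _ ≤ 4 * (3 * |α|) := mul_le_mul hinv_le habs2 (abs_nonneg _) (by norm_num)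
      _ = 12 * |α| := by ring
  have key_est : ∀ B : ℝ, 0 ≤ B → ∀ α : ℝ, |α| ≤ 1/2 → ∀ b : ℝ, |b| ≤ B →
      |pVar p (normPert f g α) b - pVar p f b| ≤ 25 * MB B * |α| := by
    intro B hB α hα b hb
    have hα1 : |α| ≤ 1 := by linarith
    rw [pVar_normPert]
    have e : pVar p (fun t => f t + (α:ℂ) * g t) b / (nrm f g α) ^ 2 - pVar p f b
        = pVar p (fun t => f t + (α:ℂ) * g t) b * (((nrm f g α) ^ 2)⁻¹ - 1)
          + (pVar p (fun t => f t + (α:ℂ) * g t) b - pVar p f b) := by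
      rw [div_eq_mul_inv]; ring
    rw [e]
    have h1 := est1 B α hα1 b hb
    have h3 := est3 B hB α hα1 b hb
    have h4 := est4 α hα
    have h5 := pVar_nonneg p (fun t => f t + (α:ℂ) * g t) b
    have h6 := hMBnn B hB
    have habs : |pVar p (fun t => f t + (α:ℂ) * g t) b * (((nrm f g α) ^ 2)⁻¹ - 1)|
        ≤ (2 * MB B) * (12 * |α|) := by
      rw [abs_mul, abs_of_nonneg h5]
      exact mul_le_mul h3 h4 (abs_nonneg _) (by linarith)
    calc |_ + _| ≤ |pVar p (fun t => f t + (α:ℂ) * g t) b * (((nrm f g α) ^ 2)⁻¹ - 1)|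
          + |pVar p (fun t => f t + (α:ℂ) * g t) b - pVar p f b| := abs_add_le _ _
      _ ≤ (2 * MB B) * (12 * |α|) + |α| * MB B := add_le_add habs h1
      _ = 25 * MB B * |α| := by ring
  -- facts about the minimizer of f
  have hf_min := exists_min hp hf2 hffin (by rw [hIf]; norm_num)
  have hf_ne : ¬ f =ᵐ[volume] 0 := by
    intro h
    have h0 : eLpNorm f 2 volume = 0 := by
      rw [eLpNorm_congr_ae h, eLpNorm_zero]
    rw [hfnorm] at h0
    exact one_ne_zero h0
  have huniq : ∀ b : ℝ, (∀ c, pVar p f b ≤ pVar p f c) → b = pMean p f :=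
    fun b hbmin => min_unique hp hf2 hffin hf_ne hbmin hf_min.1
  -- minimizers of the perturbed functionals
  have hper_min : ∀ α : ℝ, |α| ≤ 1/2 →
      (∀ b, pVar p (normPert f g α) (pMean p (normPert f g α)) ≤ pVar p (normPert f g α) b) ∧
      |pMean p (normPert f g α)| ^ p * (∫ t : ℝ, ‖normPert f g α t‖ ^ 2)
        ≤ 2 ^ p * (2 * pVar p (normPert f g α) 0) := by
    intro α hα
    exact exists_min hp (hNP2 α) (hNPp α (by linarith)) (by rw [hnormint α hα]; norm_num)
  have hQ0 : ∀ α : ℝ, |α| ≤ 1/2 → pVar p (normPert f g α) 0 ≤ 8 * MB 0 := by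
    intro α hα
    have h1 : pVar p (fun t => f t + (α:ℂ) * g t) 0 ≤ 2 * MB 0 :=
      est3 0 le_rfl α (by linarith) 0 (by simp)
    have h2 := hnpos α hα
    have h3 := pVar_nonneg p (normPert f g α) 0
    have h4 : (1:ℝ)/4 ≤ (nrm f g α) ^ 2 := by nlinarith
    have h5 : pVar p (normPert f g α) 0 * (nrm f g α) ^ 2
        = pVar p (fun t => f t + (α:ℂ) * g t) 0 := by
      rw [pVar_normPert]
      field_simp
    nlinarith [hMBnn 0 le_rfl]
  set B0 : ℝ := (2 ^ p * (16 * MB 0 + 1)) ^ p⁻¹ with hB0def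
  have hMB0 := hMBnn 0 le_rfl
  have h2p := two_rpow_pos p
  have hB0nn : 0 ≤ B0 := Real.rpow_nonneg (by positivity) _
  have hB0p : B0 ^ p = 2 ^ p * (16 * MB 0 + 1) :=
    Real.rpow_inv_rpow (by positivity) (ne_of_gt hp0)
  have hμbound : ∀ α : ℝ, |α| ≤ 1/2 → |pMean p (normPert f g α)| ≤ B0 := by
    intro α hα
    have h1 := (hper_min α hα).2
    rw [hnormint α hα, mul_one] at h1
    have h2 := hQ0 α hα
    by_contra hcon
    push_neg at hcon
    have h3 : B0 ^ p < |pMean p (normPert f g α)| ^ p :=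
      Real.rpow_lt_rpow hB0nn hcon hp0
    rw [hB0p] at h3
    nlinarith
  -- convergence of the means
  have hμ : Tendsto (fun α : ℝ => pMean p (normPert f g α)) (nhds 0) (nhds (pMean p f)) := by
    rw [Metric.tendsto_nhds]
    intro ε hε
    set B : ℝ := max B0 (|pMean p f| + ε) with hBdef
    have hBnn : 0 ≤ B := le_trans hB0nn (le_max_left _ _)
    have hμ0B : |pMean p f| ≤ B := le_trans (by linarith) (le_max_right _ _)
    obtain ⟨δ, hδpos, hδ⟩ : ∃ δ, 0 < δ ∧ ∀ b : ℝ, |b| ≤ B → ε ≤ |b - pMean p f| →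
        pVar p f (pMean p f) + δ ≤ pVar p f b := by
      by_cases hKne : (Set.Icc (-B) B ∩ {b : ℝ | ε ≤ |b - pMean p f|}).Nonempty
      · have hKcl : IsClosed {b : ℝ | ε ≤ |b - pMean p f|} :=
          isClosed_le continuous_const ((continuous_id.sub continuous_const).abs)
        have hKc : IsCompact (Set.Icc (-B) B ∩ {b : ℝ | ε ≤ |b - pMean p f|}) :=
          isCompact_Icc.inter_right hKcl
        obtain ⟨c, hcK, hcmin⟩ := hKc.exists_isMinOn hKne
          (pVar_continuous hp0 hf2 hffin).continuousOn
        have hlt : pVar p f (pMean p f) < pVar p f c := by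
          rcases eq_or_lt_of_le (hf_min.1 c) with h | h
          · exfalso
            have hcm : ∀ d, pVar p f c ≤ pVar p f d := fun d => h ▸ hf_min.1 d
            have hce := huniq c hcm
            have h2 := hcK.2
            rw [Set.mem_setOf_eq, hce] at h2
            simp at h2
            linarith
          · exact h
        refine ⟨pVar p f c - pVar p f (pMean p f), by linarith, ?_⟩
        intro b hb1 hb2
        have hbK : b ∈ Set.Icc (-B) B ∩ {b : ℝ | ε ≤ |b - pMean p f|} :=
          ⟨Set.mem_Icc.mpr (abs_le.mp hb1), hb2⟩
        have := hcmin hbK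
        simp only [Set.mem_setOf_eq] at this
        linarith [this]
      · refine ⟨1, one_pos, ?_⟩
        intro b hb1 hb2
        exact absurd ⟨b, Set.mem_Icc.mpr (abs_le.mp hb1), hb2⟩ hKne
    have hMBB := hMBnn B hBnn
    set η : ℝ := min (1/2) (δ / (3 * (25 * MB B + 1))) with hηdef
    have hηpos : 0 < η := lt_min (by norm_num) (div_pos hδpos (by positivity))
    filter_upwards [Metric.ball_mem_nhds (0:ℝ) hηpos] with α hα
    have hαs : |α| < η := by rwa [Metric.mem_ball, Real.dist_eq, sub_zero] at hα
    have hα2 : |α| ≤ 1/2 := le_trans hαs.le (min_le_left _ _)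
    rw [Real.dist_eq]
    by_contra hcon
    push_neg at hcon
    have hμαB : |pMean p (normPert f g α)| ≤ B := le_trans (hμbound α hα2) (le_max_left _ _)
    have e1 := key_est B hBnn α hα2 _ hμαB
    have e2 := key_est B hBnn α hα2 _ hμ0B
    have e3 := (hper_min α hα2).1 (pMean p f)
    have e4 := hδ _ hμαB hcon
    have hsmall : 25 * MB B * |α| ≤ δ / 3 := by
      have h5 : η ≤ δ / (3 * (25 * MB B + 1)) := min_le_right _ _
      have h6 : (25 * MB B) * |α| ≤ (25 * MB B + 1) * η := by nlinarith [abs_nonneg α]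
      have h8 : (25 * MB B + 1) * η ≤ (25 * MB B + 1) * (δ / (3 * (25 * MB B + 1))) :=
        mul_le_mul_of_nonneg_left h5 (by positivity)
      have h9 : (25 * MB B + 1) * (δ / (3 * (25 * MB B + 1))) = δ / 3 := by
        field_simp
      linarith
    rw [abs_le] at e1 e2
    linarith [e1.1, e2.2, hδpos, e3, e4]
  -- convergence of the dispersions
  have hqc : Tendsto (fun α : ℝ => pVar p f (pMean p (normPert f g α))) (nhds 0)
      (nhds (pVar p f (pMean p f))) :=
    ((pVar_continuous hp0 hf2 hffin).tendsto (pMean p f)).comp hμ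
  have hVar : Tendsto (fun α : ℝ => pVar p (normPert f g α) (pMean p (normPert f g α)))
      (nhds 0) (nhds (pVar p f (pMean p f))) := by
    rw [Metric.tendsto_nhds]
    intro ε hε
    have h2 := Metric.tendsto_nhds.mp hqc (ε/2) (by linarith)
    have hMBB0 := hMBnn B0 hB0nn
    set η : ℝ := min (1/2) ((ε/2) / (25 * MB B0 + 1)) with hηdef
    have hηpos : 0 < η := lt_min (by norm_num) (div_pos (by linarith) (by positivity))
    filter_upwards [h2, Metric.ball_mem_nhds (0:ℝ) hηpos] with α hα1 hα
    have hαs : |α| < η := by rwa [Metric.mem_ball, Real.dist_eq, sub_zero] at hα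
    have hα2 : |α| ≤ 1/2 := le_trans hαs.le (min_le_left _ _)
    have e1 := key_est B0 hB0nn α hα2 _ (hμbound α hα2)
    have hsmall : 25 * MB B0 * |α| < ε/2 := by
      have h5 : η ≤ (ε/2) / (25 * MB B0 + 1) := min_le_right _ _
      have h6 : 25 * MB B0 * |α| < (25 * MB B0 + 1) * η := by nlinarith [abs_nonneg α]
      have h8 : (25 * MB B0 + 1) * η ≤ (25 * MB B0 + 1) * ((ε/2) / (25 * MB B0 + 1)) :=
        mul_le_mul_of_nonneg_left h5 (by positivity)
      have h9 : (25 * MB B0 + 1) * ((ε/2) / (25 * MB B0 + 1)) = ε/2 := by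
        field_simp
      linarith
    rw [Real.dist_eq] at hα1 ⊢
    calc |pVar p (normPert f g α) (pMean p (normPert f g α)) - pVar p f (pMean p f)|
        ≤ |pVar p (normPert f g α) (pMean p (normPert f g α))
              - pVar p f (pMean p (normPert f g α))|
          + |pVar p f (pMean p (normPert f g α)) - pVar p f (pMean p f)| :=
          abs_sub_le _ _ _
      _ < ε/2 + ε/2 := add_lt_add_of_le_of_lt (e1.trans hsmall.le) hα1
      _ = ε := by ring
  constructor
  · have hsq : Tendsto (fun x : ℝ => Real.sqrt x) (nhds (pVar p f (pMean p f)))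
        (nhds (Real.sqrt (pVar p f (pMean p f)))) := Real.continuous_sqrt.tendsto _
    exact hsq.comp hVar
  · exact hμ
end

section
/- Let p > 1 and suppose f, g ∈ L²(ℝ) satisfy ‖f‖₂ = ‖g‖₂ = 1 and that Δ_p(f) and Δ_p(g) are finite. For real α with |α| < 1 define h_α = (f + αg)/‖f + αg‖₂. If |α| < √38/2 − 3 and Δ_p(h_α)² ≤ 2 Δ_p(f)², then |μ_p(h_α) − μ_p(f)| ≤ 2 (4 Δ_p(f)²)^{1/p}. -/
open MeasureTheory Filter

open scoped ENNReal


lemma rpow_two_of_nonneg {x : ℝ} (hx : 0 ≤ x) : x ^ (2:ℝ) = x ^ 2 := by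
  rw [show (2:ℝ) = ((2:ℕ):ℝ) by norm_num, Real.rpow_natCast]

lemma sq_toReal_eLpNorm_two {w : ℝ → ℂ} {μ : Measure ℝ} (hw : MemLp w 2 μ) :
    ((eLpNorm w 2 μ).toReal) ^ 2 = ∫ t, ‖w t‖ ^ 2 ∂μ := by
  have h := hw.eLpNorm_eq_integral_rpow_norm (by norm_num) (by norm_num)
  simp only [ENNReal.toReal_ofNat] at h
  have hcong : ∫ t, ‖w t‖ ^ (2:ℝ) ∂μ = ∫ t, ‖w t‖ ^ 2 ∂μ :=
    integral_congr_ae (Eventually.of_forall fun t => rpow_two_of_nonneg (norm_nonneg _))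
  have hnn : 0 ≤ ∫ t, ‖w t‖ ^ (2:ℝ) ∂μ := by
    rw [hcong]; exact integral_nonneg fun t => by positivity
  rw [h, ENNReal.toReal_ofReal (by positivity), ← rpow_two_of_nonneg (by positivity),
    ← Real.rpow_mul hnn]
  norm_num

lemma integrable_normSq {w : ℝ → ℂ} {μ : Measure ℝ} (hw : MemLp w 2 μ) :
    Integrable (fun t => ‖w t‖ ^ 2) μ := by
  have h := hw.integrable_norm_rpow (by norm_num) (by norm_num)
  simp only [ENNReal.toReal_ofNat] at h
  exact h.congr (Eventually.of_forall fun t => rpow_two_of_nonneg (norm_nonneg _))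

lemma measurableSet_tail (a R : ℝ) : MeasurableSet {t : ℝ | R ≤ |t - a|} :=
  measurableSet_le measurable_const ((measurable_id.sub measurable_const).abs)

lemma cheb {pp : ℝ} (hpp : 0 < pp) {w : ℝ → ℂ} {a R : ℝ} (hR : 0 < R)
    (h2 : Integrable (fun t => ‖w t‖ ^ 2) volume)
    (hw : Integrable (fun t => |t - a| ^ pp * ‖w t‖ ^ 2) volume) :
    ∫ t in {t : ℝ | R ≤ |t - a|}, ‖w t‖ ^ 2 ≤ (∫ t, |t - a| ^ pp * ‖w t‖ ^ 2) / R ^ pp := by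
  have hRp : (0:ℝ) < R ^ pp := Real.rpow_pos_of_pos hR pp
  rw [le_div_iff₀ hRp]
  have h1 : (∫ t in {t : ℝ | R ≤ |t - a|}, ‖w t‖ ^ 2) * R ^ pp
      = ∫ t in {t : ℝ | R ≤ |t - a|}, R ^ pp * ‖w t‖ ^ 2 := by
    rw [integral_const_mul]; ring
  rw [h1]
  have h2' : ∫ t in {t : ℝ | R ≤ |t - a|}, R ^ pp * ‖w t‖ ^ 2
      ≤ ∫ t in {t : ℝ | R ≤ |t - a|}, |t - a| ^ pp * ‖w t‖ ^ 2 := by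
    refine setIntegral_mono_on ((h2.const_mul _).integrableOn) hw.integrableOn
      (measurableSet_tail a R) (fun t ht => ?_)
    have : R ^ pp ≤ |t - a| ^ pp := Real.rpow_le_rpow (le_of_lt hR) ht (le_of_lt hpp)
    nlinarith [sq_nonneg ‖w t‖, norm_nonneg (w t)]
  refine h2'.trans (setIntegral_le_integral hw (Eventually.of_forall fun t => ?_))
  positivity

lemma rpow_sub_bound {pp : ℝ} (hpp : 0 < pp) (a t : ℝ) :
    |t - a| ^ pp ≤ 2 ^ pp * (|t| ^ pp + |a| ^ pp) := by
  have h1 : |t - a| ≤ |t| + |a| := abs_sub t a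
  have h2 : |t - a| ^ pp ≤ (|t| + |a|) ^ pp :=
    Real.rpow_le_rpow (abs_nonneg _) h1 (le_of_lt hpp)
  refine h2.trans ?_
  have h3 : |t| + |a| ≤ 2 * max |t| |a| := by
    rcases le_total |t| |a| with h | h
    · rw [max_eq_right h]; linarith
    · rw [max_eq_left h]; linarith
  have h4 : (|t| + |a|) ^ pp ≤ (2 * max |t| |a|) ^ pp :=
    Real.rpow_le_rpow (by positivity) h3 (le_of_lt hpp)
  refine h4.trans ?_
  rw [Real.mul_rpow (by norm_num) (le_max_iff.mpr (Or.inl (abs_nonneg _)))]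
  have h5 : (max |t| |a|) ^ pp ≤ |t| ^ pp + |a| ^ pp := by
    rcases le_total |t| |a| with h | h
    · rw [max_eq_right h]
      have : (0:ℝ) ≤ |t| ^ pp := Real.rpow_nonneg (abs_nonneg _) _
      linarith
    · rw [max_eq_left h]
      have : (0:ℝ) ≤ |a| ^ pp := Real.rpow_nonneg (abs_nonneg _) _
      linarith
  have h6 : (0:ℝ) ≤ 2 ^ pp := Real.rpow_nonneg (by norm_num) _
  nlinarith

lemma integrable_shift {pp : ℝ} (hpp : 0 < pp) {w : ℝ → ℂ} (a : ℝ)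
    (hm : AEStronglyMeasurable w volume)
    (h2 : Integrable (fun t => ‖w t‖ ^ 2) volume)
    (h0 : Integrable (fun t : ℝ => |t| ^ pp * ‖w t‖ ^ 2) volume) :
    Integrable (fun t : ℝ => |t - a| ^ pp * ‖w t‖ ^ 2) volume := by
  have hmeas : AEStronglyMeasurable (fun t : ℝ => |t - a| ^ pp * ‖w t‖ ^ 2) volume := by
    refine AEStronglyMeasurable.mul ?_ ?_
    · exact (Measurable.aestronglyMeasurable (by measurability))
    · exact (hm.norm.aemeasurable.pow_const 2).aestronglyMeasurable
  refine Integrable.mono' (g := fun t : ℝ => 2 ^ pp * (|t| ^ pp * ‖w t‖ ^ 2)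
      + (2 ^ pp * |a| ^ pp) * ‖w t‖ ^ 2) ?_ hmeas (Eventually.of_forall fun t => ?_)
  · exact (h0.const_mul _).add (h2.const_mul _)
  · have hb := rpow_sub_bound hpp a t
    have hnn : (0:ℝ) ≤ ‖w t‖ ^ 2 := by positivity
    have habs : |t - a| ^ pp * ‖w t‖ ^ 2 ≤ 2 ^ pp * (|t| ^ pp + |a| ^ pp) * ‖w t‖ ^ 2 :=
      mul_le_mul_of_nonneg_right hb hnn
    rw [Real.norm_eq_abs, abs_of_nonneg (by positivity)]
    nlinarith [habs]

lemma eLpNorm_cmul (c : ℂ) (w : ℝ → ℂ) (μ : Measure ℝ) :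
    eLpNorm (fun t => c * w t) 2 μ = (‖c‖₊ : ℝ≥0∞) * eLpNorm w 2 μ := by
  have := eLpNorm_const_smul (μ := μ) (p := (2:ℝ≥0∞)) c w
  exact this

lemma aesm_wt0 {pp : ℝ} {w : ℝ → ℂ} (hm : AEStronglyMeasurable w volume) :
    AEStronglyMeasurable (fun t : ℝ => |t| ^ pp * ‖w t‖ ^ 2) volume :=
  AEStronglyMeasurable.mul (Measurable.aestronglyMeasurable (by measurability))
    ((hm.norm.aemeasurable.pow_const 2).aestronglyMeasurable)

lemma numeric_key {a B Nr : ℝ} (ha0 : 0 ≤ a) (ha : a < Real.sqrt 38 / 2 - 3)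
    (hB0 : 0 ≤ B) (hsB : Real.sqrt (3/4) - a ≤ B)
    (hN0 : 0 < Nr) (hNle : Nr ≤ 1 + a) : 1/2 < B ^ 2 / Nr ^ 2 := by
  set s := Real.sqrt (3/4) with hs
  have hs2 : s ^ 2 = 3/4 := Real.sq_sqrt (by norm_num)
  have hs0 : 0 ≤ s := Real.sqrt_nonneg _
  have hs_ub : s ≤ 0.87 := by nlinarith [sq_nonneg (s - 0.87)]
  have hs_lb : (0.86:ℝ) ≤ s := by
    rw [hs]; exact (Real.le_sqrt (by norm_num) (by norm_num)).mpr (by norm_num)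
  have hr2 : (Real.sqrt 38) ^ 2 = 38 := Real.sq_sqrt (by norm_num)
  have hr0 : 0 ≤ Real.sqrt 38 := Real.sqrt_nonneg _
  have hr_ub : Real.sqrt 38 ≤ 6.165 := by nlinarith [sq_nonneg (Real.sqrt 38 - 6.165)]
  have ha' : a ≤ 0.0825 := by linarith
  have hsa : (0:ℝ) ≤ s - a := by linarith
  have hBsq : (s - a) ^ 2 ≤ B ^ 2 := by nlinarith
  have has : a * s ≤ 0.0825 * 0.87 := mul_le_mul ha' hs_ub hs0 (by norm_num)
  have key : (1 + a) ^ 2 * (1/2) < (s - a) ^ 2 := by nlinarith [sq_nonneg a]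
  rw [lt_div_iff₀ (by positivity)]
  have hN2 : Nr ^ 2 ≤ (1 + a) ^ 2 := by nlinarith
  nlinarith



set_option maxHeartbeats 1000000 in
/-- Let `p > 1` and `f, g ∈ L²(ℝ)` with `‖f‖₂ = ‖g‖₂ = 1` and
`Δ_p(f), Δ_p(g) < ∞`.  For `|α| < 1` set `h_α = (f + αg)/‖f + αg‖₂`.
If `|α| < √38/2 - 3` and `Δ_p(h_α)² ≤ 2 Δ_p(f)²`, then
`|μ_p(h_α) - μ_p(f)| ≤ 2 (4 Δ_p(f)²)^{1/p}`. -/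
theorem statement4 (p : ℝ) (hp : 1 < p) (f g : ℝ → ℂ)
    (hfL2 : MemLp f 2 (volume : Measure ℝ)) (hgL2 : MemLp g 2 (volume : Measure ℝ))
    (hfnorm : eLpNorm f 2 volume = 1) (hgnorm : eLpNorm g 2 volume = 1)
    (hffin : Integrable (fun t : ℝ => |t| ^ p * ‖f t‖ ^ 2) volume)
    (hgfin : Integrable (fun t : ℝ => |t| ^ p * ‖g t‖ ^ 2) volume)
    (α : ℝ) (hα1 : |α| < 1) (hα2 : |α| < Real.sqrt 38 / 2 - 3)
    (hdisp : pDisp p (normPert f g α) ^ 2 ≤ 2 * pDisp p f ^ 2) :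
    |pMean p (normPert f g α) - pMean p f| ≤ 2 * (4 * pDisp p f ^ 2) ^ (1 / p) := by
  have hp0 : (0:ℝ) < p := by linarith
  set u : ℝ → ℂ := fun s => f s + (α : ℂ) * g s with hu
  set N : ℝ := (eLpNorm u 2 volume).toReal with hN
  set h : ℝ → ℂ := normPert f g α with hh
  have hnp : h = fun t => u t / (N : ℂ) := rfl
  -- L² membership
  have hαgL2 : MemLp (fun t => (α:ℂ) * g t) 2 (volume : Measure ℝ) := hgL2.const_mul _
  have huL2 : MemLp u 2 (volume : Measure ℝ) := hfL2.add hαgL2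
  have hu_ne : eLpNorm u 2 volume ≠ ∞ := huL2.eLpNorm_ne_top
  set e : ℝ≥0∞ := (‖(α:ℂ)‖₊ : ℝ≥0∞) with he_def
  have he_ne : e ≠ ∞ := ENNReal.coe_ne_top
  have hcoe : e.toReal = |α| := by simp [he_def]
  have hαgnorm : ∀ μ' : Measure ℝ,
      eLpNorm (fun t => (α:ℂ) * g t) 2 μ' = e * eLpNorm g 2 μ' := fun μ' => by
    rw [he_def, eLpNorm_cmul]
  have hfux : f = fun t => u t - (α:ℂ) * g t := by funext t; simp [hu]
  have htri1 : eLpNorm u 2 volume ≤ 1 + e := by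
    have := eLpNorm_add_le hfL2.1 hαgL2.1 one_le_two
    rw [hαgnorm volume, hgnorm, hfnorm, mul_one] at this
    exact this
  have htri2 : eLpNorm f 2 volume ≤ eLpNorm u 2 volume + e := by
    nth_rewrite 1 [hfux]
    have := eLpNorm_sub_le huL2.1 hαgL2.1 one_le_two
    rwa [hαgnorm volume, hgnorm, mul_one] at this
  have hNle : N ≤ 1 + |α| := by
    have := ENNReal.toReal_mono (by finiteness) htri1
    rwa [ENNReal.toReal_add ENNReal.one_ne_top he_ne, ENNReal.toReal_one, hcoe] at this
  have hNge : 1 - |α| ≤ N := by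
    have := ENNReal.toReal_mono (by finiteness) htri2
    rw [ENNReal.toReal_add hu_ne he_ne, hfnorm, ENNReal.toReal_one, hcoe] at this
    linarith
  have hNpos : 0 < N := by linarith
  -- h facts
  have hmul : h = fun t => ((N:ℂ))⁻¹ * u t := by
    funext t; rw [hnp]; simp [div_eq_inv_mul]
  have hhL2 : MemLp h 2 (volume : Measure ℝ) := hmul ▸ huL2.const_mul _
  have hnormsq : ∀ t, ‖h t‖ ^ 2 = ‖u t‖ ^ 2 / N ^ 2 := fun t => by
    rw [hnp]
    simp only [norm_div, Complex.norm_real, Real.norm_eq_abs, abs_of_pos hNpos]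
    rw [div_pow]
  -- total integrals
  have hu_int : N ^ 2 = ∫ t, ‖u t‖ ^ 2 := sq_toReal_eLpNorm_two huL2
  have hf_int : ∫ t, ‖f t‖ ^ 2 = 1 := by
    have := sq_toReal_eLpNorm_two hfL2
    rw [hfnorm] at this; simpa using this.symm
  have hh_int : ∫ t, ‖h t‖ ^ 2 = 1 := by
    have h1 : ∫ t, ‖h t‖ ^ 2 = ∫ t, ‖u t‖ ^ 2 / N ^ 2 :=
      integral_congr_ae (Eventually.of_forall fun t => hnormsq t)
    rw [h1, integral_div, ← hu_int, div_self (by positivity)]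
  -- integrability
  have h2f : Integrable (fun t => ‖f t‖ ^ 2) volume := integrable_normSq hfL2
  have h2h : Integrable (fun t => ‖h t‖ ^ 2) volume := integrable_normSq hhL2
  have husq_le : ∀ t, ‖u t‖ ^ 2 ≤ 2 * ‖f t‖ ^ 2 + 2 * α ^ 2 * ‖g t‖ ^ 2 := fun t => by
    have h1 : ‖u t‖ ≤ ‖f t‖ + |α| * ‖g t‖ := by
      refine (norm_add_le _ _).trans ?_
      rw [norm_mul]
      simp
    nlinarith [sq_nonneg (‖f t‖ - |α| * ‖g t‖),
      mul_self_le_mul_self (norm_nonneg (u t)) h1, sq_abs α]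
  have hu0 : Integrable (fun t : ℝ => |t| ^ p * ‖u t‖ ^ 2) volume := by
    have hmeas : AEStronglyMeasurable (fun t : ℝ => |t| ^ p * ‖u t‖ ^ 2) volume :=
      aesm_wt0 huL2.1
    refine Integrable.mono' (g := fun t : ℝ => 2 * (|t| ^ p * ‖f t‖ ^ 2)
        + (2 * α ^ 2) * (|t| ^ p * ‖g t‖ ^ 2)) ?_ hmeas (Eventually.of_forall fun t => ?_)
    · exact (hffin.const_mul _).add (hgfin.const_mul _)
    · rw [Real.norm_eq_abs, abs_of_nonneg (by positivity)]
      have hb := husq_le t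
      have h0 : (0:ℝ) ≤ |t| ^ p := Real.rpow_nonneg (abs_nonneg _) _
      nlinarith [mul_le_mul_of_nonneg_left hb h0]
  have hh0 : Integrable (fun t : ℝ => |t| ^ p * ‖h t‖ ^ 2) volume := by
    have h1 : (fun t : ℝ => |t| ^ p * ‖h t‖ ^ 2)
        = fun t : ℝ => (1 / N ^ 2) * (|t| ^ p * ‖u t‖ ^ 2) := by
      funext t; rw [hnormsq t]; ring
    rw [h1]
    exact hu0.const_mul _
  have hfa : ∀ a : ℝ, Integrable (fun t : ℝ => |t - a| ^ p * ‖f t‖ ^ 2) volume :=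
    fun a => integrable_shift hp0 a hfL2.1 h2f hffin
  have hha : ∀ a : ℝ, Integrable (fun t : ℝ => |t - a| ^ p * ‖h t‖ ^ 2) volume :=
    fun a => integrable_shift hp0 a hhL2.1 h2h hh0
  -- pVar facts
  set μf := pMean p f with hμf
  set ν := pMean p h with hν
  set Δ2 := pVar p f μf with hΔdef
  have hΔnn : 0 ≤ Δ2 := integral_nonneg fun t => by positivity
  have hdf : pDisp p f ^ 2 = Δ2 := Real.sq_sqrt hΔnn
  have hνnn : 0 ≤ pVar p h ν := integral_nonneg fun t => by positivity
  have hvar_h : pVar p h ν ≤ 2 * Δ2 := by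
    have hdh : pDisp p h ^ 2 = pVar p h ν := Real.sq_sqrt hνnn
    rw [← hdh, ← hdf]; exact hdisp
  -- positivity of Δ2
  have hΔpos : 0 < Δ2 := by
    rcases hΔnn.lt_or_eq with hlt | heq
    · exact hlt
    · exfalso
      have hzero : ∫ t, |t - μf| ^ p * ‖f t‖ ^ 2 = 0 := heq.symm
      have hae := (integral_eq_zero_iff_of_nonneg (fun t => by positivity) (hfa μf)).mp hzero
      have hne : ∀ᵐ t : ℝ, t ≠ μf := by
        have hset : {t : ℝ | ¬ t ≠ μf} = {μf} := by ext t; simp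
        rw [ae_iff, hset]
        exact measure_singleton μf
      have hf0 : f =ᵐ[volume] 0 := by
        filter_upwards [hae, hne] with t h1 h2
        have hpos : 0 < |t - μf| ^ p :=
          Real.rpow_pos_of_pos (abs_pos.mpr (sub_ne_zero.mpr h2)) p
        have h1' : |t - μf| ^ p * ‖f t‖ ^ 2 = 0 := h1
        have : ‖f t‖ ^ 2 = 0 := by
          by_contra hc
          have : 0 < ‖f t‖ ^ 2 := lt_of_le_of_ne (by positivity) (Ne.symm hc)
          nlinarith
        simpa using pow_eq_zero_iff (n := 2) (by norm_num) |>.mp this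
      have : eLpNorm f 2 volume = 0 := by
        rw [eLpNorm_congr_ae hf0, eLpNorm_zero]
      rw [hfnorm] at this
      exact one_ne_zero this
  -- the radius
  set R : ℝ := (4 * Δ2) ^ (1 / p) with hRdef
  have hRpos : 0 < R := Real.rpow_pos_of_pos (by linarith) _
  have hRp : R ^ p = 4 * Δ2 := by
    rw [hRdef, ← Real.rpow_mul (by positivity), one_div,
      inv_mul_cancel₀ (ne_of_gt hp0), Real.rpow_one]
  -- rewrite the goal
  rw [hdf]
  by_contra hcon
  push_neg at hcon
  -- hcon : 2 * R < |ν - μf|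
  -- tail and mass bounds for f
  have tail_f : ∫ t in {t : ℝ | R ≤ |t - μf|}, ‖f t‖ ^ 2 ≤ 1/4 := by
    have hc := cheb hp0 hRpos h2f (hfa μf)
    have heq : (∫ t, |t - μf| ^ p * ‖f t‖ ^ 2) / R ^ p = 1/4 := by
      rw [hRp]
      have : ∫ t, |t - μf| ^ p * ‖f t‖ ^ 2 = Δ2 := rfl
      rw [this]; field_simp
    rw [heq] at hc; exact hc
  have mass_f : 3/4 ≤ ∫ t in {t : ℝ | R ≤ |t - μf|}ᶜ, ‖f t‖ ^ 2 := by
    have hsplit := integral_add_compl (measurableSet_tail μf R) h2f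
    rw [hf_int] at hsplit
    linarith
  -- tail and mass bounds for h around ν
  have tail_h : ∫ t in {t : ℝ | R ≤ |t - ν|}, ‖h t‖ ^ 2 ≤ 1/2 := by
    have hc := cheb hp0 hRpos h2h (hha ν)
    have hle : (∫ t, |t - ν| ^ p * ‖h t‖ ^ 2) / R ^ p ≤ 1/2 := by
      rw [hRp]
      have hint : ∫ t, |t - ν| ^ p * ‖h t‖ ^ 2 = pVar p h ν := rfl
      rw [hint, div_le_iff₀ (by linarith)]
      linarith
    exact hc.trans hle
  have mass_h_J : 1/2 ≤ ∫ t in {t : ℝ | R ≤ |t - ν|}ᶜ, ‖h t‖ ^ 2 := by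
    have hsplit := integral_add_compl (measurableSet_tail ν R) h2h
    rw [hh_int] at hsplit
    linarith
  -- mass of h on I via triangle inequality on restricted measure
  set I : Set ℝ := {t : ℝ | R ≤ |t - μf|}ᶜ with hIdef
  set J : Set ℝ := {t : ℝ | R ≤ |t - ν|}ᶜ with hJdef
  have hImeas : MeasurableSet I := (measurableSet_tail μf R).compl
  have hJmeas : MeasurableSet J := (measurableSet_tail ν R).compl
  have mass_h_I : 1/2 < ∫ t in I, ‖h t‖ ^ 2 := by
    set A : ℝ := (eLpNorm f 2 (volume.restrict I)).toReal with hA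
    set B : ℝ := (eLpNorm u 2 (volume.restrict I)).toReal with hB
    set C : ℝ := (eLpNorm g 2 (volume.restrict I)).toReal with hC
    have hA2 : A ^ 2 = ∫ t in I, ‖f t‖ ^ 2 := sq_toReal_eLpNorm_two (hfL2.restrict I)
    have hB2 : B ^ 2 = ∫ t in I, ‖u t‖ ^ 2 := sq_toReal_eLpNorm_two (huL2.restrict I)
    have hA_lb : Real.sqrt (3/4) ≤ A := by
      have h34 : (3:ℝ)/4 ≤ A ^ 2 := by rw [hA2]; exact mass_f
      calc Real.sqrt (3/4) ≤ Real.sqrt (A ^ 2) := Real.sqrt_le_sqrt h34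
        _ = A := Real.sqrt_sq ENNReal.toReal_nonneg
    have hC_ub : C ≤ 1 := by
      have hle : eLpNorm g 2 (volume.restrict I) ≤ eLpNorm g 2 volume :=
        eLpNorm_mono_measure g Measure.restrict_le_self
      have := ENNReal.toReal_mono (by rw [hgnorm]; exact ENNReal.one_ne_top) hle
      rwa [hgnorm, ENNReal.toReal_one] at this
    have hC_nn : 0 ≤ C := ENNReal.toReal_nonneg
    have htriI : A ≤ B + |α| * C := by
      have h1 : eLpNorm f 2 (volume.restrict I)
          ≤ eLpNorm u 2 (volume.restrict I) + e * eLpNorm g 2 (volume.restrict I) := by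
        nth_rewrite 1 [hfux]
        have := eLpNorm_sub_le (huL2.restrict I).1 (hαgL2.restrict I).1 one_le_two
        rwa [hαgnorm (volume.restrict I)] at this
      have hfin : eLpNorm u 2 (volume.restrict I) + e * eLpNorm g 2 (volume.restrict I) ≠ ∞ := by
        refine ENNReal.add_ne_top.mpr ⟨(huL2.restrict I).eLpNorm_ne_top, ?_⟩
        exact ENNReal.mul_ne_top he_ne (hgL2.restrict I).eLpNorm_ne_top
      have h2 := ENNReal.toReal_mono hfin h1
      rwa [ENNReal.toReal_add (huL2.restrict I).eLpNorm_ne_top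
        (ENNReal.mul_ne_top he_ne (hgL2.restrict I).eLpNorm_ne_top),
        ENNReal.toReal_mul, hcoe] at h2
    have hB_lb : Real.sqrt (3/4) - |α| ≤ B := by
      have : |α| * C ≤ |α| * 1 := mul_le_mul_of_nonneg_left hC_ub (abs_nonneg α)
      have h1 : A - |α| ≤ B := by linarith
      linarith
    have hIh : ∫ t in I, ‖h t‖ ^ 2 = B ^ 2 / N ^ 2 := by
      have h1 : ∫ t in I, ‖h t‖ ^ 2 = ∫ t in I, ‖u t‖ ^ 2 / N ^ 2 :=
        integral_congr_ae (Eventually.of_forall fun t => hnormsq t)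
      rw [h1, integral_div, ← hB2]
    rw [hIh]
    exact numeric_key (abs_nonneg α) hα2 ENNReal.toReal_nonneg hB_lb hNpos hNle
  -- final contradiction
  have hdisj : Disjoint I J := by
    rw [Set.disjoint_left]
    intro t htI htJ
    have h1 : |t - μf| < R := by simpa [hIdef] using htI
    have h2 : |t - ν| < R := by simpa [hJdef] using htJ
    have h3 : |ν - μf| ≤ |ν - t| + |t - μf| := abs_sub_le ν t μf
    rw [abs_sub_comm ν t] at h3
    linarith
  have hunion : ∫ t in I ∪ J, ‖h t‖ ^ 2
      = (∫ t in I, ‖h t‖ ^ 2) + ∫ t in J, ‖h t‖ ^ 2 :=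
    setIntegral_union hdisj hJmeas h2h.integrableOn h2h.integrableOn
  have hle1 : ∫ t in I ∪ J, ‖h t‖ ^ 2 ≤ ∫ t, ‖h t‖ ^ 2 :=
    setIntegral_le_integral h2h (Eventually.of_forall fun t => by positivity)
  rw [hh_int] at hle1
  linarith
end
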